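/- In any basic feasible solution of the relaxed allocation LP, the bipartite graph G′ whose vertices are flows and nodes and whose edges are pairs (f, v) with 0 < λ_f^v < λ_f contains no cycle; i.e., G′ is a forest. -/

import Mathlib

/-- Feasibility for the relaxed allocation LP. -/
def FeasAlloc {V F : Type} [Fintype V] [Fintype F] [DecidableEq V]
    (c : V → ℝ) (rate : F → ℝ) (path : F → Finset V) (U : Finset V)
    (a : F → V → ℝ) : Prop :=
  (∀ f v, 0 ≤ a f v) ∧
  (∀ f v, v ∉ path f ∩ U → a f v = 0) ∧
  (∀ v ∈ U, ∑ f, a f v ≤ c v) ∧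
  (∀ f, ∑ v, a f v ≤ rate f)

/-- The bipartite graph on flows and nodes whose edges are the pairs `(f,v)`
with a fractional assignment `0 < λ_f^v < λ_f`. -/
def fracGraph {V F : Type} (rate : F → ℝ) (a : F → V → ℝ) :
    SimpleGraph (F ⊕ V) :=
  SimpleGraph.fromRel (fun x y =>
    match x, y with
    | Sum.inl f, Sum.inr v => 0 < a f v ∧ a f v < rate f
    | _, _ => False)

lemma list_sum_map_ite_not_mem {α : Type*} [DecidableEq α] (L : List α) (P : α)
    (h : P ∉ L) (r : ℝ) :
    (L.map (fun d => if d = P then r else 0)).sum = 0 := by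
  induction L with
  | nil => simp
  | cons a t ih =>
    simp only [List.mem_cons, not_or] at h
    simp [Ne.symm h.1, ih h.2]

lemma list_sum_map_ite_nodup {α : Type*} [DecidableEq α] (L : List α) (hnd : L.Nodup)
    (P : α) (r : ℝ) :
    (L.map (fun d => if d = P then r else 0)).sum = if P ∈ L then r else 0 := by
  induction L with
  | nil => simp
  | cons a t ih =>
    rcases List.nodup_cons.mp hnd with ⟨ha, ht⟩
    by_cases hh : a = P
    · subst hh
      simp [list_sum_map_ite_not_mem t a ha]
    · simp [hh, Ne.symm hh, ih ht]

lemma list_sum_map_sub {α : Type*} (L : List α) (f g : α → ℝ) :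
    (L.map (fun d => f d - g d)).sum = (L.map f).sum - (L.map g).sum := by
  induction L with
  | nil => simp
  | cons h t ih => simp [ih]; ring

lemma list_sum_map_add {α : Type*} (L : List α) (f g : α → ℝ) :
    (L.map (fun d => f d + g d)).sum = (L.map f).sum + (L.map g).sum := by
  induction L with
  | nil => simp
  | cons h t ih => simp [ih]; ring

lemma list_sum_swap {α β : Type*} (L : List α) (s : Finset β) (g : α → β → ℝ) :
    ∑ v ∈ s, (L.map (fun d => g d v)).sum = (L.map (fun d => ∑ v ∈ s, g d v)).sum := by
  induction L with
  | nil => simp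
  | cons h t ih => simp [Finset.sum_add_distrib, ih]

lemma closed_walk_perm {α : Type*} {G : SimpleGraph α} {x : α} (p : G.Walk x x) :
    (p.darts.map (·.toProd.1)).Perm (p.darts.map (·.toProd.2)) := by
  have heq : (p.darts.map (·.toProd.1) : List α) ++ [x] = x :: p.darts.map (·.toProd.2) := by
    rw [p.map_fst_darts_append, p.cons_map_snd_darts]
  have hperm : (x :: (p.darts.map (·.toProd.1) : List α)).Perm
      (x :: p.darts.map (·.toProd.2)) := by
    rw [← heq]
    exact (List.perm_append_comm (l₁ := p.darts.map (·.toProd.1)) (l₂ := [x])).symm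
  exact (List.perm_cons x).mp hperm

lemma frac_adj_cases {V F : Type} {rate : F → ℝ} {a : F → V → ℝ} {x y : F ⊕ V}
    (h : (fracGraph rate a).Adj x y) :
    (∃ f v, x = Sum.inl f ∧ y = Sum.inr v ∧ 0 < a f v ∧ a f v < rate f) ∨
    (∃ f v, x = Sum.inr v ∧ y = Sum.inl f ∧ 0 < a f v ∧ a f v < rate f) := by
  rw [fracGraph, SimpleGraph.fromRel_adj] at h
  obtain ⟨hne, h | h⟩ := h <;> rcases x with f | v <;> rcases y with f' | v' <;> simp_all

set_option maxHeartbeats 1000000 in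
/-- In any basic feasible solution of the relaxed allocation LP (a feasible
point that is not the midpoint of two distinct feasible points), the graph of
fractional edges contains no cycle, i.e. it is a forest. -/
theorem basic_solution_fracGraph_acyclic
    {V F : Type} [Fintype V] [Fintype F] [DecidableEq V]
    (c : V → ℝ) (rate : F → ℝ) (path : F → Finset V) (U : Finset V)
    (a : F → V → ℝ)
    (hfeas : FeasAlloc c rate path U a)
    (hbasic : ∀ b₁ b₂ : F → V → ℝ, FeasAlloc c rate path U b₁ →
      FeasAlloc c rate path U b₂ →
      a = (fun f v => (b₁ f v + b₂ f v) / 2) → b₁ = b₂) :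
    (fracGraph rate a).IsAcyclic := by
  intro x p hp
  classical
  letI : DecidableEq ((F ⊕ V) × (F ⊕ V)) := Classical.decEq _
  obtain ⟨L, hL⟩ : ∃ L : List ((F ⊕ V) × (F ⊕ V)), L = p.darts.map (·.toProd) := ⟨_, rfl⟩
  have hLadj : ∀ d ∈ L, (fracGraph rate a).Adj d.1 d.2 := by
    intro d hd
    rw [hL, List.mem_map] at hd
    obtain ⟨dart, _, rfl⟩ := hd
    exact dart.adj
  -- L is nonempty
  have hLne : L ≠ [] := by
    have h3 := hp.three_le_length
    have hlen : L.length = p.length := by rw [hL, List.length_map, p.length_darts]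
    intro hnil
    rw [hnil, List.length_nil] at hlen
    omega
  -- L has no duplicates, and never contains both a pair and its swap
  have hedgeseq : p.edges = p.darts.map SimpleGraph.Dart.edge := rfl
  have hedges : (p.darts.map SimpleGraph.Dart.edge).Nodup := by
    have := hp.isCircuit.isTrail.edges_nodup
    rwa [hedgeseq] at this
  have hLnodup : L.Nodup := by
    have hdarts : p.darts.Nodup := hedges.of_map _
    rw [hL]
    exact List.Nodup.map SimpleGraph.Dart.toProd_injective hdarts
  have hnotboth : ∀ f v, ((Sum.inl f : F ⊕ V), (Sum.inr v : F ⊕ V)) ∈ L →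
      ((Sum.inr v : F ⊕ V), (Sum.inl f : F ⊕ V)) ∈ L → False := by
    intro f v h1 h2
    rw [hL, List.mem_map] at h1 h2
    obtain ⟨d1, hd1, hd1e⟩ := h1
    obtain ⟨d2, hd2, hd2e⟩ := h2
    have : d1 = d2 := by
      refine List.inj_on_of_nodup_map hedges hd1 hd2 ?_
      rw [SimpleGraph.dart_edge_eq_mk'_iff.mpr (Or.inl hd1e),
        SimpleGraph.dart_edge_eq_mk'_iff.mpr (Or.inr hd2e)]
    rw [this, hd2e] at hd1e
    simp at hd1e
  -- the set of fractional pairs and the perturbation size ε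
  obtain ⟨S, hSdef⟩ : ∃ S : Finset (F × V),
      S = Finset.univ.filter (fun q => 0 < a q.1 q.2 ∧ a q.1 q.2 < rate q.1) := ⟨_, rfl⟩
  have hSmem : ∀ f v, 0 < a f v → a f v < rate f → (f, v) ∈ S := by
    intro f v h1 h2; simp [hSdef, h1, h2]
  -- a fractional pair exists (from the first dart of the cycle)
  obtain ⟨d0, hd0⟩ := List.exists_mem_of_ne_nil L hLne
  have hSne : S.Nonempty := by
    rcases frac_adj_cases (hLadj d0 hd0) with ⟨f, v, _, _, h1, h2⟩ | ⟨f, v, _, _, h1, h2⟩ <;>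
      exact ⟨(f, v), hSmem f v h1 h2⟩
  obtain ⟨ε, hεdef⟩ : ∃ ε : ℝ,
      ε = S.inf' hSne (fun q => min (a q.1 q.2) (rate q.1 - a q.1 q.2)) := ⟨_, rfl⟩
  have hεpos : 0 < ε := by
    rw [hεdef, Finset.lt_inf'_iff]
    intro q hq
    simp only [hSdef, Finset.mem_filter] at hq
    exact lt_min hq.2.1 (by linarith [hq.2.2])
  have hεle : ∀ f v, 0 < a f v → a f v < rate f →
      ε ≤ a f v ∧ ε ≤ rate f - a f v := by
    intro f v h1 h2
    have hle := Finset.inf'_le (f := fun q : F × V => min (a q.1 q.2) (rate q.1 - a q.1 q.2))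
      (hSmem f v h1 h2)
    rw [hεdef]
    exact ⟨le_trans hle (min_le_left _ _), le_trans hle (min_le_right _ _)⟩
  -- the perturbation δ
  obtain ⟨δ, hδdef⟩ : ∃ δ : F → V → ℝ, δ = fun f v =>
    (L.map (fun d => (if d = (Sum.inl f, Sum.inr v) then ε else 0) +
      (if d = (Sum.inr v, Sum.inl f) then -ε else 0))).sum := ⟨_, rfl⟩
  have hδexp : ∀ f v, δ f v =
      (L.map (fun d => if d = ((Sum.inl f : F ⊕ V), (Sum.inr v : F ⊕ V)) then ε else 0)).sum +
      (L.map (fun d => if d = ((Sum.inr v : F ⊕ V), (Sum.inl f : F ⊕ V)) then -ε else 0)).sum := by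
    intro f v
    rw [hδdef]
    simp only
    rw [list_sum_map_add]
  have hδval1 : ∀ f v, ((Sum.inl f : F ⊕ V), (Sum.inr v : F ⊕ V)) ∈ L → δ f v = ε := by
    intro f v hm
    have hm' : ((Sum.inr v : F ⊕ V), (Sum.inl f : F ⊕ V)) ∉ L := fun h => hnotboth f v hm h
    rw [hδexp, list_sum_map_ite_nodup L hLnodup, list_sum_map_ite_not_mem L _ hm']
    simp [hm]
  have hδval2 : ∀ f v, ((Sum.inr v : F ⊕ V), (Sum.inl f : F ⊕ V)) ∈ L → δ f v = -ε := by
    intro f v hm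
    have hm' : ((Sum.inl f : F ⊕ V), (Sum.inr v : F ⊕ V)) ∉ L := fun h => hnotboth f v h hm
    rw [hδexp, list_sum_map_ite_not_mem L _ hm', list_sum_map_ite_nodup L hLnodup]
    simp [hm]
  have hδval0 : ∀ f v, ((Sum.inl f : F ⊕ V), (Sum.inr v : F ⊕ V)) ∉ L →
      ((Sum.inr v : F ⊕ V), (Sum.inl f : F ⊕ V)) ∉ L → δ f v = 0 := by
    intro f v h1 h2
    rw [hδexp, list_sum_map_ite_not_mem L _ h1, list_sum_map_ite_not_mem L _ h2]
    ring
  -- basic properties of δ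
  have hδfrac : ∀ f v, δ f v ≠ 0 → 0 < a f v ∧ a f v < rate f := by
    intro f v h
    have hor : ((Sum.inl f : F ⊕ V), (Sum.inr v : F ⊕ V)) ∈ L ∨
        ((Sum.inr v : F ⊕ V), (Sum.inl f : F ⊕ V)) ∈ L := by
      rcases Classical.em (((Sum.inl f : F ⊕ V), (Sum.inr v : F ⊕ V)) ∈ L) with hm | hn1
      · exact Or.inl hm
      · rcases Classical.em (((Sum.inr v : F ⊕ V), (Sum.inl f : F ⊕ V)) ∈ L) with hm | hn2
        · exact Or.inr hm
        · exact absurd (hδval0 f v hn1 hn2) h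
    rcases hor with hm | hm
    · obtain ⟨f', v', he1, he2, h1, h2⟩ | ⟨f', v', he1, he2, h1, h2⟩ :=
        frac_adj_cases (hLadj _ hm)
      · simp only [Sum.inl.injEq] at he1
        simp only [Sum.inr.injEq] at he2
        subst he1; subst he2
        exact ⟨h1, h2⟩
      · simp at he1
    · obtain ⟨f', v', he1, he2, h1, h2⟩ | ⟨f', v', he1, he2, h1, h2⟩ :=
        frac_adj_cases (hLadj _ hm)
      · simp at he1
      · simp only [Sum.inr.injEq] at he1
        simp only [Sum.inl.injEq] at he2
        subst he1; subst he2
        exact ⟨h1, h2⟩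
  have hδabs : ∀ f v, |δ f v| ≤ ε := by
    intro f v
    rcases Classical.em (((Sum.inl f : F ⊕ V), (Sum.inr v : F ⊕ V)) ∈ L) with h1 | h1
    · rw [hδval1 f v h1, abs_of_pos hεpos]
    · rcases Classical.em (((Sum.inr v : F ⊕ V), (Sum.inl f : F ⊕ V)) ∈ L) with h2 | h2
      · rw [hδval2 f v h2, abs_neg, abs_of_pos hεpos]
      · rw [hδval0 f v h1 h2]; simp [le_of_lt hεpos]
  -- row sums of δ vanish
  have hrow : ∀ f, ∑ v, δ f v = 0 := by
    intro f
    rw [hδdef]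
    simp only
    rw [list_sum_swap]
    have hcong : ∀ d ∈ L,
        (∑ v : V, ((if d = (Sum.inl f, Sum.inr v) then ε else 0) +
          (if d = (Sum.inr v, Sum.inl f) then -ε else 0))) =
        (if d.1 = Sum.inl f then ε else 0) - (if d.2 = Sum.inl f then ε else 0) := by
      intro d hd
      rcases frac_adj_cases (hLadj d hd) with ⟨f', v', he1, he2, _, _⟩ | ⟨f', v', he1, he2, _, _⟩ <;>
        obtain ⟨d1, d2⟩ := d <;> subst he1 <;> subst he2 <;>
        by_cases hf : f' = f <;>
        simp [Prod.ext_iff, hf, Finset.sum_ite_eq', sub_eq_add_neg]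
    rw [List.map_congr_left hcong]
    have hsub : (L.map (fun d => (if d.1 = Sum.inl f then ε else 0) -
        (if d.2 = Sum.inl f then ε else 0))).sum =
        (L.map (fun d => if d.1 = Sum.inl f then ε else 0)).sum -
        (L.map (fun d => if d.2 = Sum.inl f then ε else 0)).sum := by
      exact list_sum_map_sub L _ _
    rw [hsub]
    have hperm := closed_walk_perm p
    have h1 : (L.map (fun d => if d.1 = Sum.inl f then ε else 0)).sum =
        ((p.darts.map (·.toProd.1)).map (fun u => if u = Sum.inl f then ε else 0)).sum := by
      rw [hL, List.map_map, List.map_map]; rfl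
    have h2 : (L.map (fun d => if d.2 = Sum.inl f then ε else 0)).sum =
        ((p.darts.map (·.toProd.2)).map (fun u => if u = Sum.inl f then ε else 0)).sum := by
      rw [hL, List.map_map, List.map_map]; rfl
    rw [h1, h2, (hperm.map _).sum_eq]
    ring
  -- column sums of δ vanish
  have hcol : ∀ v, ∑ f, δ f v = 0 := by
    intro v
    rw [hδdef]
    simp only
    rw [list_sum_swap]
    have hcong : ∀ d ∈ L,
        (∑ f : F, ((if d = (Sum.inl f, Sum.inr v) then ε else 0) +
          (if d = (Sum.inr v, Sum.inl f) then -ε else 0))) =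
        (if d.2 = Sum.inr v then ε else 0) - (if d.1 = Sum.inr v then ε else 0) := by
      intro d hd
      rcases frac_adj_cases (hLadj d hd) with ⟨f', v', he1, he2, _, _⟩ | ⟨f', v', he1, he2, _, _⟩ <;>
        obtain ⟨d1, d2⟩ := d <;> subst he1 <;> subst he2 <;>
        by_cases hv : v' = v <;>
        simp [Prod.ext_iff, hv, Finset.sum_ite_eq', sub_eq_add_neg]
    rw [List.map_congr_left hcong]
    have hsub : (L.map (fun d => (if d.2 = Sum.inr v then ε else 0) -
        (if d.1 = Sum.inr v then ε else 0))).sum =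
        (L.map (fun d => if d.2 = Sum.inr v then ε else 0)).sum -
        (L.map (fun d => if d.1 = Sum.inr v then ε else 0)).sum := by
      exact list_sum_map_sub L _ _
    rw [hsub]
    have hperm := closed_walk_perm p
    have h1 : (L.map (fun d => if d.1 = Sum.inr v then ε else 0)).sum =
        ((p.darts.map (·.toProd.1)).map (fun u => if u = Sum.inr v then ε else 0)).sum := by
      rw [hL, List.map_map, List.map_map]; rfl
    have h2 : (L.map (fun d => if d.2 = Sum.inr v then ε else 0)).sum =
        ((p.darts.map (·.toProd.2)).map (fun u => if u = Sum.inr v then ε else 0)).sum := by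
      rw [hL, List.map_map, List.map_map]; rfl
    rw [h1, h2, (hperm.map _).sum_eq]
    ring
  -- δ is nonzero somewhere
  have hδne : ∃ f v, δ f v ≠ 0 := by
    rcases frac_adj_cases (hLadj d0 hd0) with ⟨f, v, he1, he2, _, _⟩ | ⟨f, v, he1, he2, _, _⟩
    · refine ⟨f, v, ?_⟩
      have hm : ((Sum.inl f : F ⊕ V), (Sum.inr v : F ⊕ V)) ∈ L := by
        have : d0 = (Sum.inl f, Sum.inr v) := Prod.ext he1 he2
        rwa [this] at hd0
      rw [hδval1 f v hm]
      exact ne_of_gt hεpos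
    · refine ⟨f, v, ?_⟩
      have hm : ((Sum.inr v : F ⊕ V), (Sum.inl f : F ⊕ V)) ∈ L := by
        have : d0 = (Sum.inr v, Sum.inl f) := Prod.ext he1 he2
        rwa [this] at hd0
      rw [hδval2 f v hm]
      exact ne_of_lt (neg_neg_iff_pos.mpr hεpos)
  -- the two perturbed feasible solutions
  obtain ⟨hnn, hsupp, hcap, hrate⟩ := hfeas
  have hfeaspert : ∀ s : ℝ, s = 1 ∨ s = -1 →
      FeasAlloc c rate path U (fun f v => a f v + s * δ f v) := by
    intro s hs
    have habs : ∀ f v, |s * δ f v| ≤ ε := by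
      intro f v
      rcases hs with rfl | rfl <;> simpa using hδabs f v
    refine ⟨?_, ?_, ?_, ?_⟩
    · intro f v
      show 0 ≤ a f v + s * δ f v
      by_cases h : δ f v = 0
      · simp [h]; exact hnn f v
      · have ⟨h1, h2⟩ := hδfrac f v h
        have := (hεle f v h1 h2).1
        have := abs_le.mp (habs f v)
        linarith
    · intro f v hv
      show a f v + s * δ f v = 0
      have ha0 := hsupp f v hv
      by_cases h : δ f v = 0
      · simp [h, ha0]
      · exact absurd ha0 (ne_of_gt (hδfrac f v h).1)
    · intro v hv
      show ∑ f, (a f v + s * δ f v) ≤ c v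
      have : ∑ f, (a f v + s * δ f v) = (∑ f, a f v) + s * ∑ f, δ f v := by
        rw [Finset.sum_add_distrib, Finset.mul_sum]
      rw [this, hcol v]
      simpa using hcap v hv
    · intro f
      show ∑ v, (a f v + s * δ f v) ≤ rate f
      have : ∑ v, (a f v + s * δ f v) = (∑ v, a f v) + s * ∑ v, δ f v := by
        rw [Finset.sum_add_distrib, Finset.mul_sum]
      rw [this, hrow f]
      simpa using hrate f
  have hb1 := hfeaspert 1 (Or.inl rfl)
  have hb2 := hfeaspert (-1) (Or.inr rfl)
  have heq := hbasic _ _ hb1 hb2 (by funext f v; ring)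
  obtain ⟨f, v, hfv⟩ := hδne
  have := congrFun (congrFun heq f) v
  apply hfv
  linarith
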